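/- Let B be a bicategory having pseudo pullbacks of all cospans with both legs in W, where W satisfies [WB1]–[WB5], is pullback closed (for every pseudo pullback square of u, v ∈ W with projections ū, v̄, the composite u∘v̄ is again in W), and consists of co-full arrows. Then every 2-cell of B(W⁻¹) between spans (v, f) and (v′, f′) admits a representative whose left-hand invertible 2-cell is the chosen pseudo pullback square of the cospan (v, v′). -/

import Mathlib

open CategoryTheory Bicategory

universe w v u

/-- A class of 1-morphisms in a bicategory. -/
def WClass (B : Type u) [Bicategory.{w, v} B] :=
  ∀ ⦃a b : B⦄, (a ⟶ b) → Prop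

namespace WClass

variable {B : Type u} [Bicategory.{w, v} B]

/-- [WB1]: all identities are in `W`. -/
def WB1 (W : WClass B) : Prop := ∀ a : B, W (𝟙 a)

/-- [WB2]: for composable arrows of `W` there is a pre-composition landing in `W`. -/
def WB2 (W : WClass B) : Prop :=
  ∀ ⦃a b c : B⦄ (vm : a ⟶ b) (wm : b ⟶ c), W vm → W wm →
    ∃ (a' : B) (u : a' ⟶ a), W (u ≫ vm ≫ wm)

/-- [WB3]: squares with invertible fillers over cospans with one leg in `W`. -/
def WB3 (W : WClass B) : Prop :=
  ∀ ⦃a b c : B⦄ (wm : a ⟶ b) (f : c ⟶ b), W wm →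
    ∃ (d : B) (h : d ⟶ a) (vm : d ⟶ c), W vm ∧ Nonempty (h ≫ wm ≅ vm ≫ f)

/-- `β` is a lifting of the 2-cell `η : f ≫ wm ⟶ g ≫ wm` along `wm`, via `u`. -/
def IsLift ⦃a b c : B⦄ (f g : a ⟶ b) (wm : b ⟶ c) (η : f ≫ wm ⟶ g ≫ wm)
    ⦃a' : B⦄ (u : a' ⟶ a) (β : u ≫ f ⟶ u ≫ g) : Prop :=
  β ▷ wm = (α_ u f wm).hom ≫ u ◁ η ≫ (α_ u g wm).inv

/-- [WB4]: existence of liftings of 2-cells along arrows of `W`, together with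
the compatibility of any two such liftings. -/
def WB4 (W : WClass B) : Prop :=
  (∀ ⦃a b c : B⦄ (f g : a ⟶ b) (wm : b ⟶ c), W wm → ∀ η : f ≫ wm ⟶ g ≫ wm,
    ∃ (a' : B) (u : a' ⟶ a), W u ∧ ∃ β : u ≫ f ⟶ u ≫ g, IsLift f g wm η u β) ∧
  (∀ ⦃a b c : B⦄ (f g : a ⟶ b) (wm : b ⟶ c), W wm → ∀ η : f ≫ wm ⟶ g ≫ wm,
    ∀ ⦃a₁ : B⦄ (u₁ : a₁ ⟶ a) (β₁ : u₁ ≫ f ⟶ u₁ ≫ g), W u₁ → IsLift f g wm η u₁ β₁ →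
      ∀ ⦃a₂ : B⦄ (u₂ : a₂ ⟶ a) (β₂ : u₂ ≫ f ⟶ u₂ ≫ g), W u₂ → IsLift f g wm η u₂ β₂ →
        ∃ (d : B) (s : d ⟶ a₁) (t : d ⟶ a₂), W (s ≫ u₁) ∧ W (t ≫ u₂) ∧
          ∃ ε' : s ≫ u₁ ≅ t ≫ u₂,
            ((α_ s u₁ f).hom ≫ s ◁ β₁ ≫ (α_ s u₁ g).inv) ≫ ε'.hom ▷ g =
              ε'.hom ▷ f ≫ (α_ t u₂ f).hom ≫ t ◁ β₂ ≫ (α_ t u₂ g).inv)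

/-- [WB5]: `W` is closed under invertible 2-cells. -/
def WB5 (W : WClass B) : Prop :=
  ∀ ⦃a b : B⦄ (vm wm : a ⟶ b), W wm → Nonempty (vm ≅ wm) → W vm

end WClass

/-- A 1-morphism `wm` is co-fully-faithful if every 2-cell `wm ≫ f ⟶ wm ≫ g`
factors uniquely through right whiskering by `wm`. -/
def CoFF {B : Type u} [Bicategory.{w, v} B] ⦃a b : B⦄ (wm : a ⟶ b) : Prop :=
  ∀ ⦃c : B⦄ (f g : b ⟶ c) (η : wm ≫ f ⟶ wm ≫ g), ∃! η' : f ⟶ g, wm ◁ η' = η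

/-- A 1-morphism `wm` is co-full if every 2-cell `wm ≫ f ⟶ wm ≫ g`
factors (not necessarily uniquely) through right whiskering by `wm`. -/
def CoFull {B : Type u} [Bicategory.{w, v} B] ⦃a b : B⦄ (wm : a ⟶ b) : Prop :=
  ∀ ⦃c : B⦄ (f g : b ⟶ c) (η : wm ≫ f ⟶ wm ≫ g), ∃ η' : f ⟶ g, wm ◁ η' = η

/-- Equivalence of 2-cell diagrams between the spans `(u₁, f₁)` and `(u₂, f₂)` in the
construction of the bicategory of fractions: the diagram `(v₁, v₂, αc, β)` is equivalent
to the diagram `(v₁', v₂', αc', β')` when there is a common refinement `s, t` with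
invertible comparison 2-cells `ε₁, ε₂`, the relevant composite in `W`, satisfying the
two pasting equations. -/
def DiagEquiv {B : Type u} [Bicategory.{w, v} B] (W : WClass B)
    {a b c₁ c₂ : B} (u₁ : c₁ ⟶ a) (f₁ : c₁ ⟶ b) (u₂ : c₂ ⟶ a) (f₂ : c₂ ⟶ b)
    {d : B} (v₁ : d ⟶ c₁) (v₂ : d ⟶ c₂)
    (αc : v₁ ≫ u₁ ≅ v₂ ≫ u₂) (β : v₁ ≫ f₁ ⟶ v₂ ≫ f₂)
    {d' : B} (v₁' : d' ⟶ c₁) (v₂' : d' ⟶ c₂)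
    (αc' : v₁' ≫ u₁ ≅ v₂' ≫ u₂) (β' : v₁' ≫ f₁ ⟶ v₂' ≫ f₂) : Prop :=
  ∃ (e : B) (s : e ⟶ d) (t : e ⟶ d'),
    W ((s ≫ v₁) ≫ u₁) ∧
    ∃ (ε₁ : s ≫ v₁ ≅ t ≫ v₁') (ε₂ : s ≫ v₂ ≅ t ≫ v₂'),
      (ε₁.hom ▷ u₁ ≫ (α_ t v₁' u₁).hom ≫ t ◁ αc'.hom ≫ (α_ t v₂' u₂).inv =
        (α_ s v₁ u₁).hom ≫ s ◁ αc.hom ≫ (α_ s v₂ u₂).inv ≫ ε₂.hom ▷ u₂) ∧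
      (ε₁.hom ▷ f₁ ≫ (α_ t v₁' f₁).hom ≫ t ◁ β' ≫ (α_ t v₂' f₂).inv =
        (α_ s v₁ f₁).hom ≫ s ◁ β ≫ (α_ s v₂ f₂).inv ≫ ε₂.hom ▷ f₂)

/-- Data of a pseudo pullback of a cospan `u : a ⟶ c ⟵ b : vm` in a bicategory:
an apex with projections, an invertible filler 2-cell, and a lifting universal
property compatible with the fillers. -/
structure PseudoPullbackData {B : Type u} [Bicategory.{w, v} B] {a b c : B}
    (u : a ⟶ c) (vm : b ⟶ c) where
  pt : B
  fst : pt ⟶ a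
  snd : pt ⟶ b
  iso : fst ≫ u ≅ snd ≫ vm
  lift : ∀ {x : B} (p : x ⟶ a) (q : x ⟶ b), (p ≫ u ≅ q ≫ vm) → (x ⟶ pt)
  liftFst : ∀ {x : B} (p : x ⟶ a) (q : x ⟶ b) (e : p ≫ u ≅ q ≫ vm),
    lift p q e ≫ fst ≅ p
  liftSnd : ∀ {x : B} (p : x ⟶ a) (q : x ⟶ b) (e : p ≫ u ≅ q ≫ vm),
    lift p q e ≫ snd ≅ q
  lift_w : ∀ {x : B} (p : x ⟶ a) (q : x ⟶ b) (e : p ≫ u ≅ q ≫ vm),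
    (α_ (lift p q e) fst u).hom ≫ lift p q e ◁ iso.hom ≫
        (α_ (lift p q e) snd vm).inv ≫ (liftSnd p q e).hom ▷ vm =
      (liftFst p q e).hom ▷ u ≫ e.hom


section Auxiliary

variable {B : Type u} [Bicategory.{w, v} B]

lemma isLift_id {a b c : B} (f : a ⟶ b) (wm : b ⟶ c) :
    WClass.IsLift f f wm (𝟙 (f ≫ wm)) (𝟙 a) (𝟙 (𝟙 a ≫ f)) := by
  show (𝟙 (𝟙 a ≫ f)) ▷ wm = (α_ (𝟙 a) f wm).hom ≫ 𝟙 a ◁ 𝟙 (f ≫ wm) ≫ (α_ (𝟙 a) f wm).inv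
  simp

lemma isLift_comp {a b c : B} {f g k : a ⟶ b} {wm : b ⟶ c}
    {η : f ≫ wm ⟶ g ≫ wm} {η' : g ≫ wm ⟶ k ≫ wm}
    {a' : B} {u : a' ⟶ a} {β : u ≫ f ⟶ u ≫ g} {β' : u ≫ g ⟶ u ≫ k}
    (h : WClass.IsLift f g wm η u β) (h' : WClass.IsLift g k wm η' u β') :
    WClass.IsLift f k wm (η ≫ η') u (β ≫ β') := by
  have hh : β ▷ wm = (α_ u f wm).hom ≫ u ◁ η ≫ (α_ u g wm).inv := h
  have hh' : β' ▷ wm = (α_ u g wm).hom ≫ u ◁ η' ≫ (α_ u k wm).inv := h'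
  show (β ≫ β') ▷ wm = (α_ u f wm).hom ≫ u ◁ (η ≫ η') ≫ (α_ u k wm).inv
  rw [Bicategory.comp_whiskerRight, hh, hh']
  simp

lemma isLift_whisk {a b c : B} {f g : a ⟶ b} {wm : b ⟶ c} {η : f ≫ wm ⟶ g ≫ wm}
    {a' : B} {u : a' ⟶ a} {β : u ≫ f ⟶ u ≫ g} (h : WClass.IsLift f g wm η u β)
    {a'' : B} (m : a'' ⟶ a') :
    WClass.IsLift f g wm η (m ≫ u)
      ((α_ m u f).hom ≫ m ◁ β ≫ (α_ m u g).inv) := by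
  have hh : β ▷ wm = (α_ u f wm).hom ≫ u ◁ η ≫ (α_ u g wm).inv := h
  show ((α_ m u f).hom ≫ m ◁ β ≫ (α_ m u g).inv) ▷ wm =
    (α_ (m ≫ u) f wm).hom ≫ (m ≫ u) ◁ η ≫ (α_ (m ≫ u) g wm).inv
  rw [Bicategory.comp_whiskerRight, Bicategory.comp_whiskerRight, Bicategory.whisker_assoc, hh]
  simp only [Bicategory.whiskerLeft_comp]
  bicategory

lemma isLift_isoHead {a b c : B} {f g : a ⟶ b} {wm : b ⟶ c} {η : f ≫ wm ⟶ g ≫ wm}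
    {a' : B} {u u' : a' ⟶ a} (ψ : u ≅ u') {β : u ≫ f ⟶ u ≫ g}
    (h : WClass.IsLift f g wm η u β) :
    WClass.IsLift f g wm η u' (ψ.inv ▷ f ≫ β ≫ ψ.hom ▷ g) := by
  have hh : β ▷ wm = (α_ u f wm).hom ≫ u ◁ η ≫ (α_ u g wm).inv := h
  show (ψ.inv ▷ f ≫ β ≫ ψ.hom ▷ g) ▷ wm =
    (α_ u' f wm).hom ≫ u' ◁ η ≫ (α_ u' g wm).inv
  rw [Bicategory.comp_whiskerRight, Bicategory.comp_whiskerRight, hh]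
  simp only [Category.assoc]
  rw [associator_naturality_left_assoc, ← whisker_exchange_assoc]
  simp [← Bicategory.comp_whiskerRight]

lemma whiskerLeft_eq_id_of_wb4eq {D A Y C : B} (s : D ⟶ A) (u : A ⟶ Y) (F : Y ⟶ C)
    (tt : D ⟶ Y) (Δ' : u ≫ F ⟶ u ≫ F) (ε' : s ≫ u ≅ tt ≫ 𝟙 Y)
    (EQ : ((α_ s u F).hom ≫ s ◁ Δ' ≫ (α_ s u F).inv) ≫ ε'.hom ▷ F =
      ε'.hom ▷ F ≫ (α_ tt (𝟙 Y) F).hom ≫ tt ◁ 𝟙 (𝟙 Y ≫ F) ≫ (α_ tt (𝟙 Y) F).inv) :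
    s ◁ Δ' = 𝟙 (s ≫ (u ≫ F)) := by
  have h : (α_ s u F).hom ≫ s ◁ Δ' ≫ (α_ s u F).inv = 𝟙 _ := by
    rw [← cancel_mono (ε'.hom ▷ F)]; simpa using EQ
  calc s ◁ Δ'
      = (α_ s u F).inv ≫ ((α_ s u F).hom ≫ s ◁ Δ' ≫ (α_ s u F).inv) ≫ (α_ s u F).hom := by
        simp
    _ = 𝟙 _ := by rw [h]; simp

/-- Key lemma: an invertible 2-cell between composites with an arrow of `W` can be
"divided" by the `W`-arrow after refining by an arrow of `W`. -/
lemma invertible_lift (W : WClass B) (h1 : W.WB1) (h2 : W.WB2) (h3 : W.WB3) (h4 : W.WB4)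
    {Y P' a' : B} (F G : Y ⟶ P') (z : P' ⟶ a') (hz : W z) (Θ : F ≫ z ≅ G ≫ z) :
    ∃ (X : B) (n : X ⟶ Y), W n ∧ Nonempty (n ≫ F ≅ n ≫ G) := by
  obtain ⟨Y₁, n₁, hn₁, β₁, L₁⟩ := h4.1 F G z hz Θ.hom
  obtain ⟨Y₂, n₂, hn₂, β₂, L₂⟩ := h4.1 G F z hz Θ.inv
  obtain ⟨Y₃, h₃, k₃, hk₃, ⟨ι₃⟩⟩ := h3 n₁ n₂ hn₁
  obtain ⟨Y₄, m₄, huW⟩ := h2 k₃ n₂ hk₃ hn₂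
  set u : Y₄ ⟶ Y := m₄ ≫ (k₃ ≫ n₂) with hu_def
  have huW' : W u := huW
  let ψ' : (m₄ ≫ h₃) ≫ n₁ ≅ u := α_ m₄ h₃ n₁ ≪≫ whiskerLeftIso m₄ ι₃
  let φ' : (m₄ ≫ k₃) ≫ n₂ ≅ u := α_ m₄ k₃ n₂
  set γ₁ : u ≫ F ⟶ u ≫ G :=
    ψ'.inv ▷ F ≫ ((α_ (m₄ ≫ h₃) n₁ F).hom ≫ (m₄ ≫ h₃) ◁ β₁ ≫
      (α_ (m₄ ≫ h₃) n₁ G).inv) ≫ ψ'.hom ▷ G with hγ₁_def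
  set γ₂ : u ≫ G ⟶ u ≫ F :=
    φ'.inv ▷ G ≫ ((α_ (m₄ ≫ k₃) n₂ G).hom ≫ (m₄ ≫ k₃) ◁ β₂ ≫
      (α_ (m₄ ≫ k₃) n₂ F).inv) ≫ φ'.hom ▷ F with hγ₂_def
  have Cl₁ : WClass.IsLift F G z Θ.hom u γ₁ := isLift_isoHead ψ' (isLift_whisk L₁ (m₄ ≫ h₃))
  have Cl₂ : WClass.IsLift G F z Θ.inv u γ₂ := isLift_isoHead φ' (isLift_whisk L₂ (m₄ ≫ k₃))
  have C1 : WClass.IsLift F F z (𝟙 (F ≫ z)) u (γ₁ ≫ γ₂) := by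
    have := isLift_comp Cl₁ Cl₂; rwa [Θ.hom_inv_id] at this
  have C2 : WClass.IsLift G G z (𝟙 (G ≫ z)) u (γ₂ ≫ γ₁) := by
    have := isLift_comp Cl₂ Cl₁; rwa [Θ.inv_hom_id] at this
  obtain ⟨D₁, s, tt, hsu, -, ε', EQ⟩ :=
    h4.2 F F z hz (𝟙 (F ≫ z)) u (γ₁ ≫ γ₂) huW' C1 (𝟙 Y) (𝟙 (𝟙 Y ≫ F)) (h1 Y)
      (isLift_id F z)
  have E1 : s ◁ (γ₁ ≫ γ₂) = 𝟙 (s ≫ (u ≫ F)) :=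
    whiskerLeft_eq_id_of_wb4eq s u F tt (γ₁ ≫ γ₂) ε' EQ
  set γ₁' : (s ≫ u) ≫ F ⟶ (s ≫ u) ≫ G :=
    (α_ s u F).hom ≫ s ◁ γ₁ ≫ (α_ s u G).inv with hγ₁'_def
  set γ₂' : (s ≫ u) ≫ G ⟶ (s ≫ u) ≫ F :=
    (α_ s u G).hom ≫ s ◁ γ₂ ≫ (α_ s u F).inv with hγ₂'_def
  have hid1 : γ₁' ≫ γ₂' = 𝟙 _ := by
    rw [hγ₁'_def, hγ₂'_def]
    simp only [Category.assoc, Iso.inv_hom_id_assoc]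
    rw [← Bicategory.whiskerLeft_comp_assoc, E1]
    simp
  have C2' : WClass.IsLift G G z (𝟙 (G ≫ z)) (s ≫ u)
      ((α_ s u G).hom ≫ s ◁ (γ₂ ≫ γ₁) ≫ (α_ s u G).inv) := isLift_whisk C2 s
  obtain ⟨D₂, s₂, tt₂, hs₂u, -, ε₂, EQ₂⟩ :=
    h4.2 G G z hz (𝟙 (G ≫ z)) (s ≫ u)
      ((α_ s u G).hom ≫ s ◁ (γ₂ ≫ γ₁) ≫ (α_ s u G).inv) hsu C2'
      (𝟙 Y) (𝟙 (𝟙 Y ≫ G)) (h1 Y) (isLift_id G z)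
  have E2 : s₂ ◁ ((α_ s u G).hom ≫ s ◁ (γ₂ ≫ γ₁) ≫ (α_ s u G).inv) = 𝟙 _ :=
    whiskerLeft_eq_id_of_wb4eq s₂ (s ≫ u) G tt₂ _ ε₂ EQ₂
  have hid2 : γ₂' ≫ γ₁' = (α_ s u G).hom ≫ s ◁ (γ₂ ≫ γ₁) ≫ (α_ s u G).inv := by
    rw [hγ₂'_def, hγ₁'_def]
    simp only [Category.assoc, Iso.inv_hom_id_assoc, Bicategory.whiskerLeft_comp]
  refine ⟨D₂, s₂ ≫ (s ≫ u), hs₂u, ⟨?_⟩⟩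
  exact
    { hom := (α_ s₂ (s ≫ u) F).hom ≫ s₂ ◁ γ₁' ≫ (α_ s₂ (s ≫ u) G).inv
      inv := (α_ s₂ (s ≫ u) G).hom ≫ s₂ ◁ γ₂' ≫ (α_ s₂ (s ≫ u) F).inv
      hom_inv_id := by
        simp only [Category.assoc, Iso.inv_hom_id_assoc]
        rw [← Bicategory.whiskerLeft_comp_assoc, hid1]
        simp
      inv_hom_id := by
        simp only [Category.assoc, Iso.inv_hom_id_assoc]
        rw [← Bicategory.whiskerLeft_comp_assoc, hid2, E2]
        simp }

lemma coFull_comp {a b c : B} {w₁ : a ⟶ b} {w₂ : b ⟶ c}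
    (hw₁ : CoFull w₁) (hw₂ : CoFull w₂) : CoFull (w₁ ≫ w₂) := by
  intro c' f g η
  obtain ⟨ξ, hξ⟩ := hw₁ (w₂ ≫ f) (w₂ ≫ g) ((α_ w₁ w₂ f).inv ≫ η ≫ (α_ w₁ w₂ g).hom)
  obtain ⟨η', hη'⟩ := hw₂ f g ξ
  refine ⟨η', ?_⟩
  rw [Bicategory.comp_whiskerLeft, hη', hξ]
  simp

lemma coFull_of_iso {a b : B} {w m : a ⟶ b} (ψ : w ≅ m) (hm : CoFull m) : CoFull w := by
  intro c f g η
  obtain ⟨η', hη'⟩ := hm f g (ψ.inv ▷ f ≫ η ≫ ψ.hom ▷ g)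
  refine ⟨η', ?_⟩
  have hex : w ◁ η' ≫ ψ.hom ▷ g = ψ.hom ▷ f ≫ m ◁ η' := whisker_exchange ψ.hom η'
  have : w ◁ η' = ψ.hom ▷ f ≫ m ◁ η' ≫ ψ.inv ▷ g := by
    rw [← Category.assoc, ← hex]; simp
  rw [this, hη']
  simp

/-- Transport of the 2-cell-diagram equations along a refinement `N`. -/
lemma diag_eq_whisker {e e' dd PP C₁ C₂ A' : B} (N : e' ⟶ e) (s : e ⟶ dd) (t : e ⟶ PP)
    (w₁ : dd ⟶ C₁) (w₂ : dd ⟶ C₂) (p : PP ⟶ C₁) (q : PP ⟶ C₂)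
    (x₁ : C₁ ⟶ A') (x₂ : C₂ ⟶ A') (ε₁ : s ≫ w₁ ≅ t ≫ p) (ε₂ : s ≫ w₂ ≅ t ≫ q)
    (θ : w₁ ≫ x₁ ⟶ w₂ ≫ x₂) (φ : p ≫ x₁ ⟶ q ≫ x₂)
    (H : ε₁.hom ▷ x₁ ≫ (α_ t p x₁).hom ≫ t ◁ φ ≫ (α_ t q x₂).inv =
      (α_ s w₁ x₁).hom ≫ s ◁ θ ≫ (α_ s w₂ x₂).inv ≫ ε₂.hom ▷ x₂) :
    (α_ N s w₁ ≪≫ whiskerLeftIso N ε₁ ≪≫ (α_ N t p).symm).hom ▷ x₁ ≫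
        (α_ (N ≫ t) p x₁).hom ≫ (N ≫ t) ◁ φ ≫ (α_ (N ≫ t) q x₂).inv =
      (α_ (N ≫ s) w₁ x₁).hom ≫ (N ≫ s) ◁ θ ≫ (α_ (N ≫ s) w₂ x₂).inv ≫
        (α_ N s w₂ ≪≫ whiskerLeftIso N ε₂ ≪≫ (α_ N t q).symm).hom ▷ x₂ := by
  have claim1 :
      (α_ N s w₁ ≪≫ whiskerLeftIso N ε₁ ≪≫ (α_ N t p).symm).hom ▷ x₁ ≫
        (α_ (N ≫ t) p x₁).hom ≫ (N ≫ t) ◁ φ ≫ (α_ (N ≫ t) q x₂).inv =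
      ((α_ N s w₁).hom ▷ x₁ ≫ (α_ N (s ≫ w₁) x₁).hom) ≫
        N ◁ (ε₁.hom ▷ x₁ ≫ (α_ t p x₁).hom ≫ t ◁ φ ≫ (α_ t q x₂).inv) ≫
        ((α_ N (t ≫ q) x₂).inv ≫ (α_ N t q).inv ▷ x₂) := by
    simp only [Iso.trans_hom, whiskerLeftIso_hom, Iso.symm_hom, Bicategory.whiskerLeft_comp]
    bicategory
  have claim2 :
      (α_ (N ≫ s) w₁ x₁).hom ≫ (N ≫ s) ◁ θ ≫ (α_ (N ≫ s) w₂ x₂).inv ≫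
        (α_ N s w₂ ≪≫ whiskerLeftIso N ε₂ ≪≫ (α_ N t q).symm).hom ▷ x₂ =
      ((α_ N s w₁).hom ▷ x₁ ≫ (α_ N (s ≫ w₁) x₁).hom) ≫
        N ◁ ((α_ s w₁ x₁).hom ≫ s ◁ θ ≫ (α_ s w₂ x₂).inv ≫ ε₂.hom ▷ x₂) ≫
        ((α_ N (t ≫ q) x₂).inv ≫ (α_ N t q).inv ▷ x₂) := by
    simp only [Iso.trans_hom, whiskerLeftIso_hom, Iso.symm_hom, Bicategory.whiskerLeft_comp]
    bicategory
  rw [claim1, claim2, H]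

end Auxiliary

theorem statement17 {B : Type u} [Bicategory.{w, v} B] (W : WClass B)
    (h1 : W.WB1) (h2 : W.WB2) (h3 : W.WB3) (h4 : W.WB4) (h5 : W.WB5)
    (hcofull : ∀ ⦃x y : B⦄ (f : x ⟶ y), W f → CoFull f)
    (pb : ∀ {x y z : B} (u : x ⟶ z) (vm : y ⟶ z), W u → W vm → PseudoPullbackData u vm)
    (hpbc : ∀ {x y z : B} (u : x ⟶ z) (vm : y ⟶ z) (hu : W u) (hv : W vm),
      W ((pb u vm hu hv).fst ≫ u))
    {a b c₁ c₂ d : B} (u₁ : c₁ ⟶ a) (f₁ : c₁ ⟶ b) (u₂ : c₂ ⟶ a) (f₂ : c₂ ⟶ b)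
    (hu₁ : W u₁) (hu₂ : W u₂)
    (v₁ : d ⟶ c₁) (v₂ : d ⟶ c₂) (hv : W (v₁ ≫ u₁))
    (αc : v₁ ≫ u₁ ≅ v₂ ≫ u₂) (β : v₁ ≫ f₁ ⟶ v₂ ≫ f₂) :
    ∃ δ : (pb u₁ u₂ hu₁ hu₂).fst ≫ f₁ ⟶ (pb u₁ u₂ hu₁ hu₂).snd ≫ f₂,
      DiagEquiv W u₁ f₁ u₂ f₂ v₁ v₂ αc β
        (pb u₁ u₂ hu₁ hu₂).fst (pb u₁ u₂ hu₁ hu₂).snd (pb u₁ u₂ hu₁ hu₂).iso δ := by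
  set P := pb u₁ u₂ hu₁ hu₂ with hP
  obtain ⟨t₀, A₁, A₂, lw⟩ :
      ∃ t₀ : d ⟶ P.pt, ∃ A₁ : t₀ ≫ P.fst ≅ v₁, ∃ A₂ : t₀ ≫ P.snd ≅ v₂,
        (α_ t₀ P.fst u₁).hom ≫ t₀ ◁ P.iso.hom ≫ (α_ t₀ P.snd u₂).inv ≫ A₂.hom ▷ u₂ =
          A₁.hom ▷ u₁ ≫ αc.hom :=
    ⟨P.lift v₁ v₂ αc, P.liftFst v₁ v₂ αc, P.liftSnd v₁ v₂ αc, P.lift_w v₁ v₂ αc⟩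
  have hz : W (P.fst ≫ u₁) := hpbc u₁ u₂ hu₁ hu₂
  obtain ⟨d₀, h, vm, hvm, ⟨ι⟩⟩ := h3 (v₁ ≫ u₁) (P.fst ≫ u₁) hv
  obtain ⟨X, n, hn, ⟨Biso⟩⟩ :=
    invertible_lift W h1 h2 h3 h4 (h ≫ t₀) vm (P.fst ≫ u₁) hz
      (α_ h t₀ (P.fst ≫ u₁) ≪≫
        whiskerLeftIso h ((α_ t₀ P.fst u₁).symm ≪≫ whiskerRightIso A₁ u₁) ≪≫ ι)
  set s₁ : X ⟶ d := n ≫ h with hs₁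
  have cf : CoFull (s₁ ≫ t₀) :=
    coFull_of_iso (α_ n h t₀ ≪≫ Biso) (coFull_comp (hcofull n hn) (hcofull vm hvm))
  -- the two comparison isomorphisms at level X
  set E₁ : s₁ ≫ v₁ ≅ (s₁ ≫ t₀) ≫ P.fst :=
    (whiskerLeftIso s₁ A₁).symm ≪≫ (α_ s₁ t₀ P.fst).symm with hE₁
  set E₂ : s₁ ≫ v₂ ≅ (s₁ ≫ t₀) ≫ P.snd :=
    (whiskerLeftIso s₁ A₂).symm ≪≫ (α_ s₁ t₀ P.snd).symm with hE₂
  -- the first equation at level X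
  have lwr : αc.hom = A₁.inv ▷ u₁ ≫ (α_ t₀ P.fst u₁).hom ≫ t₀ ◁ P.iso.hom ≫
      (α_ t₀ P.snd u₂).inv ≫ A₂.hom ▷ u₂ := by
    rw [← cancel_epi (A₁.hom ▷ u₁), hom_inv_whiskerRight_assoc]
    exact lw.symm
  have eq1X : E₁.hom ▷ u₁ ≫ (α_ (s₁ ≫ t₀) P.fst u₁).hom ≫ (s₁ ≫ t₀) ◁ P.iso.hom ≫
      (α_ (s₁ ≫ t₀) P.snd u₂).inv =
      (α_ s₁ v₁ u₁).hom ≫ s₁ ◁ αc.hom ≫ (α_ s₁ v₂ u₂).inv ≫ E₂.hom ▷ u₂ := by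
    have K1 : (α_ (s₁ ≫ t₀) P.fst u₁).hom ≫ (s₁ ≫ t₀) ◁ P.iso.hom ≫
        (α_ (s₁ ≫ t₀) P.snd u₂).inv =
        (α_ s₁ t₀ P.fst).hom ▷ u₁ ≫ (α_ s₁ (t₀ ≫ P.fst) u₁).hom ≫
          s₁ ◁ ((α_ t₀ P.fst u₁).hom ≫ t₀ ◁ P.iso.hom ≫ (α_ t₀ P.snd u₂).inv) ≫
          (α_ s₁ (t₀ ≫ P.snd) u₂).inv ≫ (α_ s₁ t₀ P.snd).inv ▷ u₂ := by
      simp only [Bicategory.whiskerLeft_comp]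
      bicategory
    rw [K1, lwr]
    simp only [hE₁, hE₂, Iso.trans_hom, Iso.symm_hom, whiskerLeftIso_inv,
      Bicategory.whiskerLeft_comp, Bicategory.comp_whiskerRight, Category.assoc,
      inv_hom_whiskerRight_assoc]
    rw [associator_naturality_middle_assoc]
    rw [associator_inv_naturality_middle_assoc]
    simp [← Bicategory.comp_whiskerRight]
  -- construct δ by co-fullness
  obtain ⟨δ, hδ⟩ := cf (P.fst ≫ f₁) (P.snd ≫ f₂)
    ((α_ (s₁ ≫ t₀) P.fst f₁).inv ≫ E₁.inv ▷ f₁ ≫ (α_ s₁ v₁ f₁).hom ≫ s₁ ◁ β ≫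
      (α_ s₁ v₂ f₂).inv ≫ E₂.hom ▷ f₂ ≫ (α_ (s₁ ≫ t₀) P.snd f₂).hom)
  have eq2X : E₁.hom ▷ f₁ ≫ (α_ (s₁ ≫ t₀) P.fst f₁).hom ≫ (s₁ ≫ t₀) ◁ δ ≫
      (α_ (s₁ ≫ t₀) P.snd f₂).inv =
      (α_ s₁ v₁ f₁).hom ≫ s₁ ◁ β ≫ (α_ s₁ v₂ f₂).inv ≫ E₂.hom ▷ f₂ := by
    rw [hδ]
    simp
  -- refine once more to land the relevant composite in W
  obtain ⟨y, m, hc⟩ := h2 vm (P.fst ≫ u₁) hvm hz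
  obtain ⟨D, h', k', hk', ⟨ι'⟩⟩ := h3 n m hn
  obtain ⟨D', m', hfin⟩ := h2 k' (m ≫ vm ≫ P.fst ≫ u₁) hk' hc
  refine ⟨δ, D', (m' ≫ h') ≫ s₁, (m' ≫ h') ≫ (s₁ ≫ t₀), ?_, 
    α_ (m' ≫ h') s₁ v₁ ≪≫ whiskerLeftIso (m' ≫ h') E₁ ≪≫ (α_ (m' ≫ h') (s₁ ≫ t₀) P.fst).symm,
    α_ (m' ≫ h') s₁ v₂ ≪≫ whiskerLeftIso (m' ≫ h') E₂ ≪≫ (α_ (m' ≫ h') (s₁ ≫ t₀) P.snd).symm,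
    diag_eq_whisker (m' ≫ h') s₁ (s₁ ≫ t₀) v₁ v₂ P.fst P.snd u₁ u₂ E₁ E₂ αc.hom P.iso.hom eq1X,
    diag_eq_whisker (m' ≫ h') s₁ (s₁ ≫ t₀) v₁ v₂ P.fst P.snd f₁ f₂ E₁ E₂ β δ eq2X⟩
  -- the W-condition
  refine h5 _ _ hfin ⟨?_⟩
  calc (((m' ≫ h') ≫ s₁) ≫ v₁) ≫ u₁
      ≅ (m' ≫ h') ≫ s₁ ≫ v₁ ≫ u₁ :=
        α_ ((m' ≫ h') ≫ s₁) v₁ u₁ ≪≫ α_ (m' ≫ h') s₁ (v₁ ≫ u₁)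
    _ ≅ (m' ≫ h') ≫ n ≫ vm ≫ P.fst ≫ u₁ :=
        whiskerLeftIso (m' ≫ h') (α_ n h (v₁ ≫ u₁) ≪≫ whiskerLeftIso n ι)
    _ ≅ m' ≫ k' ≫ m ≫ vm ≫ P.fst ≫ u₁ :=
        α_ m' h' (n ≫ vm ≫ P.fst ≫ u₁) ≪≫
          whiskerLeftIso m' ((α_ h' n (vm ≫ P.fst ≫ u₁)).symm ≪≫
            whiskerRightIso ι' (vm ≫ P.fst ≫ u₁) ≪≫ α_ k' m (vm ≫ P.fst ≫ u₁))
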